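/- Let Y be a Fraïssé fence and ⪯ a strongly compatible order on Y. Then both the set of points of Y which are ⪯-maximal but not ⪯-minimal, and the set of points of Y which are simultaneously ⪯-minimal and ⪯-maximal (equivalently, the points whose connected component is a singleton), are dense in Y. -/

import Mathlib

open Set

/-- A subset of a topological space is an arc if it is homeomorphic to the unit interval. -/
def IsArc {Y : Type*} [TopologicalSpace Y] (A : Set Y) : Prop :=
  Nonempty (A ≃ₜ unitInterval)

/-- A fence is a compact metrizable space whose connected components are singletons or arcs. -/
def IsFence (Y : Type*) [TopologicalSpace Y] : Prop :=
  CompactSpace Y ∧ TopologicalSpace.MetrizableSpace Y ∧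
    ∀ x : Y, connectedComponent x = {x} ∨ IsArc (connectedComponent x)

/-- A closed partial order on a topological space. -/
def IsClosedPartialOrder {Y : Type*} [TopologicalSpace Y] (r : Y → Y → Prop) : Prop :=
  IsClosed {p : Y × Y | r p.1 p.2} ∧ Reflexive r ∧ AntiSymmetric r ∧ Transitive r

/-- A closed partial order whose restriction to each connected component is a total order. -/
def IsCompatibleOrder {Y : Type*} [TopologicalSpace Y] (r : Y → Y → Prop) : Prop :=
  IsClosedPartialOrder r ∧
    ∀ x : Y, ∀ y ∈ connectedComponent x, ∀ z ∈ connectedComponent x, r y z ∨ r z y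

/-- A smooth fence is a fence admitting a closed partial order whose restriction to each
connected component is a total order. -/
def IsSmoothFence (Y : Type*) [TopologicalSpace Y] : Prop :=
  IsFence Y ∧ ∃ r : Y → Y → Prop, IsCompatibleOrder r

/-- A strongly compatible order: a compatible closed partial order such that any two
comparable points lie in the same connected component. -/
def IsStronglyCompatibleOrder {Y : Type*} [TopologicalSpace Y] (r : Y → Y → Prop) : Prop :=
  IsCompatibleOrder r ∧ ∀ x y : Y, r x y → y ∈ connectedComponent x

/-- `x` is one of the two endpoints of the arc `A`. -/
def IsEndpointOfArc {Y : Type*} [TopologicalSpace Y] (A : Set Y) (x : Y) : Prop :=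
  ∃ (h : A ≃ₜ unitInterval) (hx : x ∈ A), h ⟨x, hx⟩ = 0 ∨ h ⟨x, hx⟩ = 1

/-- A point is an endpoint of the space if, whenever it belongs to an arc, it is one of
its two endpoints. -/
def IsEndpoint {Y : Type*} [TopologicalSpace Y] (x : Y) : Prop :=
  ∀ A : Set Y, IsArc A → x ∈ A → IsEndpointOfArc A x

/-- A Fraïssé fence: a nonempty smooth fence such that for any two open sets meeting a
common connected component there is an arc component with one endpoint in each. -/
def IsFraisseFence (Y : Type*) [TopologicalSpace Y] : Prop :=
  Nonempty Y ∧ IsSmoothFence Y ∧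
    ∀ O O' : Set Y, IsOpen O → IsOpen O' →
      (∃ z : Y, (O ∩ connectedComponent z).Nonempty ∧ (O' ∩ connectedComponent z).Nonempty) →
      ∃ w : Y, IsArc (connectedComponent w) ∧
        ∃ a b : Y, a ≠ b ∧ a ∈ O ∧ b ∈ O' ∧
          IsEndpointOfArc (connectedComponent w) a ∧ IsEndpointOfArc (connectedComponent w) b

private lemma fence_core_max (le' : unitInterval → unitInterval → Prop)
    (hcl : IsClosed {p : unitInterval × unitInterval | le' p.1 p.2})
    (hrefl : ∀ s, le' s s)
    (hanti : ∀ s t, le' s t → le' t s → s = t)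
    (htot : ∀ s t, le' s t ∨ le' t s)
    (m M : unitInterval) (hm : ∀ t, le' m t) (hM : ∀ t, le' t M)
    (hne : m ≠ M) : M = 0 ∨ M = 1 := by
  have hsecIic : ∀ c : unitInterval, IsClosed {t | le' t c} := by
    intro c
    have h1 : {t | le' t c}
        = (fun t => (t, c)) ⁻¹' {p : unitInterval × unitInterval | le' p.1 p.2} := rfl
    rw [h1]
    exact hcl.preimage (continuous_id.prodMk continuous_const)
  have hsecIci : ∀ c : unitInterval, IsClosed {t | le' c t} := by
    intro c
    have h1 : {t | le' c t}
        = (fun t => (c, t)) ⁻¹' {p : unitInterval × unitInterval | le' p.1 p.2} := rfl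
    rw [h1]
    exact hcl.preimage (continuous_const.prodMk continuous_id)
  have key : ∀ (c : unitInterval) (F G : Set unitInterval), IsClosed F → IsClosed G →
      {t | le' t c} ⊆ F ∪ G → ({t | le' t c} ∩ F).Nonempty → c ∈ G →
      ({t | le' t c} ∩ (F ∩ G)).Nonempty := by
    intro c F G hF hG hcov hFne hcG
    by_contra hempty
    have hA : IsClosed ({t | le' t c} ∩ F) := (hsecIic c).inter hF
    have hB : IsClosed (({t | le' t c} ∩ G) ∪ {t | le' c t}) :=
      ((hsecIic c).inter hG).union (hsecIci c)
    have hcover : (univ : Set unitInterval) ⊆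
        ({t | le' t c} ∩ F) ∪ (({t | le' t c} ∩ G) ∪ {t | le' c t}) := by
      intro t _
      rcases htot t c with h | h
      · rcases hcov h with h' | h'
        · exact Or.inl ⟨h, h'⟩
        · exact Or.inr (Or.inl ⟨h, h'⟩)
      · exact Or.inr (Or.inr h)
    have hint := (isPreconnected_closed_iff.mp isPreconnected_univ) _ _ hA hB hcover
      (by obtain ⟨t, ht⟩ := hFne; exact ⟨t, mem_univ t, ht⟩)
      ⟨c, mem_univ c, Or.inr (hrefl c)⟩
    obtain ⟨t, -, ht1, ht2⟩ := hint
    rcases ht2 with ht2 | ht2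
    · exact hempty ⟨t, ht1.1, ht1.2, ht2.2⟩
    · have htc : t = c := hanti t c ht1.1 ht2
      subst htc
      exact hempty ⟨t, ht1.1, ht1.2, hcG⟩
  have hpre : ∀ c : unitInterval, IsPreconnected {t | le' t c} := by
    intro c
    rw [isPreconnected_closed_iff]
    intro F G hF hG hcov hFne hGne
    have hc : c ∈ {t | le' t c} := hrefl c
    rcases hcov hc with hcF | hcG
    · obtain ⟨t, ht, htG, htF⟩ := key c G F hG hF (fun t ht => (hcov ht).symm) hGne hcF
      exact ⟨t, ht, htF, htG⟩
    · exact key c F G hF hG hcov hFne hcG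
  have hDM : {t : unitInterval | t ≠ M}
      = ⋃₀ {S | ∃ c : unitInterval, c ≠ M ∧ S = {t | le' t c}} := by
    ext t
    constructor
    · intro ht
      exact ⟨{s | le' s t}, ⟨t, ht, rfl⟩, hrefl t⟩
    · rintro ⟨S, ⟨c, hcM, rfl⟩, htS⟩
      intro hEq
      subst hEq
      exact hcM (hanti c t (hM c) htS)
  have hpreM : IsPreconnected {t : unitInterval | t ≠ M} := by
    rw [hDM]
    apply isPreconnected_sUnion m
    · rintro S ⟨c, hcM, rfl⟩
      exact hm c
    · rintro S ⟨c, hcM, rfl⟩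
      exact hpre c
  by_contra hcon
  push_neg at hcon
  obtain ⟨h0, h1⟩ := hcon
  have hL : IsOpen {t : unitInterval | (t : ℝ) < (M : ℝ)} :=
    isOpen_lt continuous_subtype_val continuous_const
  have hR : IsOpen {t : unitInterval | (M : ℝ) < (t : ℝ)} :=
    isOpen_lt continuous_const continuous_subtype_val
  have hcov : {t : unitInterval | t ≠ M}
      ⊆ {t : unitInterval | (t : ℝ) < (M : ℝ)} ∪ {t : unitInterval | (M : ℝ) < (t : ℝ)} := by
    intro t ht
    rcases lt_or_gt_of_ne (fun h => ht (Subtype.ext h)) with h | h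
    · exact Or.inl h
    · exact Or.inr h
  have h0M : (0 : unitInterval) ≠ M := fun h => h0 h.symm
  have h1M : (1 : unitInterval) ≠ M := fun h => h1 h.symm
  have h0lt : ((0 : unitInterval) : ℝ) < (M : ℝ) := by
    have := M.2.1
    rcases this.lt_or_eq with h | h
    · simpa using h
    · exact absurd (Subtype.ext h.symm) h0M.symm
  have h1lt : (M : ℝ) < ((1 : unitInterval) : ℝ) := by
    have := M.2.2
    rcases this.lt_or_eq with h | h
    · simpa using h
    · exact absurd (Subtype.ext h) h1M.symm
  obtain ⟨t, -, htL, htR⟩ := hpreM _ _ hL hR hcov ⟨0, h0M, h0lt⟩ ⟨1, h1M, h1lt⟩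
  exact absurd ((show (t : ℝ) < M from htL).trans (show (M : ℝ) < t from htR)) (lt_irrefl _)

private lemma fence_exists_max {Y : Type*} [TopologicalSpace Y] [T2Space Y]
    (r : Y → Y → Prop) (hcl : IsClosed {p : Y × Y | r p.1 p.2})
    (hrefl : ∀ x, r x x) (htrans : ∀ a b c, r a b → r b c → r a c)
    (S : Set Y) (hS : IsCompact S) (hne : S.Nonempty)
    (htot : ∀ y ∈ S, ∀ z ∈ S, r y z ∨ r z y) :
    ∃ M ∈ S, ∀ c ∈ S, r c M := by
  haveI : Nonempty S := hne.to_subtype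
  have hSc : IsClosed S := hS.isClosed
  have hUc : ∀ c : S, IsClosed {t | t ∈ S ∧ r (c : Y) t} := by
    intro c
    have h1 : {t | t ∈ S ∧ r (c : Y) t}
        = S ∩ ((fun t => ((c : Y), t)) ⁻¹' {p : Y × Y | r p.1 p.2}) := rfl
    rw [h1]
    exact hSc.inter (hcl.preimage (continuous_const.prodMk continuous_id))
  have hdir : Directed (· ⊇ ·) (fun c : S => {t | t ∈ S ∧ r (c : Y) t}) := by
    intro c d
    rcases htot c c.2 d d.2 with h | h
    · exact ⟨d, fun t ht => ⟨ht.1, htrans _ _ _ h ht.2⟩, fun t ht => ht⟩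
    · exact ⟨c, fun t ht => ht, fun t ht => ⟨ht.1, htrans _ _ _ h ht.2⟩⟩
  have hnon : ∀ c : S, {t | t ∈ S ∧ r (c : Y) t}.Nonempty := fun c => ⟨c, c.2, hrefl c⟩
  have hcpt : ∀ c : S, IsCompact {t | t ∈ S ∧ r (c : Y) t} := fun c =>
    hS.of_isClosed_subset (hUc c) (fun t ht => ht.1)
  obtain ⟨M, hM⟩ := IsCompact.nonempty_iInter_of_directed_nonempty_isCompact_isClosed
    _ hdir hnon hcpt hUc
  rw [mem_iInter] at hM
  obtain ⟨c0, hc0⟩ := hne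
  exact ⟨M, (hM ⟨c0, hc0⟩).1, fun c hc => (hM ⟨c, hc⟩).2⟩

private lemma fence_endpoint_eq {Y : Type*} [TopologicalSpace Y]
    (r : Y → Y → Prop) (hcl : IsClosed {p : Y × Y | r p.1 p.2})
    (hrefl : ∀ x, r x x) (hanti : ∀ s t, r s t → r t s → s = t)
    (C : Set Y) (htotC : ∀ y ∈ C, ∀ z ∈ C, r y z ∨ r z y)
    (m M : Y) (hmC : m ∈ C) (hMC : M ∈ C)
    (hmin : ∀ c ∈ C, r m c) (hmax : ∀ c ∈ C, r c M) (hne : m ≠ M)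
    (a : Y) (ha : IsEndpointOfArc C a) : a = m ∨ a = M := by
  obtain ⟨h, haC, hend⟩ := ha
  set g : unitInterval → Y := fun s => ((h.symm s : C) : Y) with hg
  have hgcont : Continuous g := continuous_subtype_val.comp h.symm.continuous
  have hgC : ∀ s, g s ∈ C := fun s => (h.symm s).2
  set le' : unitInterval → unitInterval → Prop := fun s t => r (g s) (g t) with hle
  have hcl' : IsClosed {p : unitInterval × unitInterval | le' p.1 p.2} := by
    have h1 : {p : unitInterval × unitInterval | le' p.1 p.2}
        = (fun p : unitInterval × unitInterval => (g p.1, g p.2)) ⁻¹' {p : Y × Y | r p.1 p.2} := rfl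
    rw [h1]
    exact hcl.preimage ((hgcont.comp continuous_fst).prodMk (hgcont.comp continuous_snd))
  have hginj : Function.Injective g := Subtype.coe_injective.comp h.symm.injective
  have hanti' : ∀ s t, le' s t → le' t s → s = t := fun s t h1 h2 => hginj (hanti _ _ h1 h2)
  have htot' : ∀ s t, le' s t ∨ le' t s := fun s t => htotC _ (hgC s) _ (hgC t)
  have hrefl' : ∀ s, le' s s := fun s => hrefl _
  set m' := h ⟨m, hmC⟩ with hm'def
  set M' := h ⟨M, hMC⟩ with hM'def
  have hgm : g m' = m := by rw [hg, hm'def]; simp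
  have hgM : g M' = M := by rw [hg, hM'def]; simp
  have hm' : ∀ t, le' m' t := by
    intro t; show r (g m') (g t); rw [hgm]; exact hmin _ (hgC t)
  have hM' : ∀ t, le' t M' := by
    intro t; show r (g t) (g M'); rw [hgM]; exact hmax _ (hgC t)
  have hne' : m' ≠ M' := by
    intro e
    apply hne
    have h2 := congrArg g e
    rw [hgm, hgM] at h2; exact h2
  have hmax01 := fence_core_max le' hcl' hrefl' hanti' htot' m' M' hm' hM' hne'
  have hclswap : IsClosed {p : unitInterval × unitInterval | le' p.2 p.1} := by
    have h1 : {p : unitInterval × unitInterval | le' p.2 p.1}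
        = Prod.swap ⁻¹' {p : unitInterval × unitInterval | le' p.1 p.2} := rfl
    rw [h1]; exact hcl'.preimage continuous_swap
  have hmin01 := fence_core_max (fun s t => le' t s) hclswap hrefl'
    (fun s t h1 h2 => hanti' s t h2 h1) (fun s t => (htot' t s)) M' m' hM' hm' (Ne.symm hne')
  have hpair : (m' = 0 ∧ M' = 1) ∨ (m' = 1 ∧ M' = 0) := by
    rcases hmin01 with h2 | h2 <;> rcases hmax01 with h1 | h1
    · exact absurd (h2.trans h1.symm) hne'
    · exact Or.inl ⟨h2, h1⟩
    · exact Or.inr ⟨h2, h1⟩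
    · exact absurd (h2.trans h1.symm) hne'
  have hag : g (h ⟨a, haC⟩) = a := by rw [hg]; simp
  rcases hend with he | he <;> rcases hpair with ⟨hp1, hp2⟩ | ⟨hp1, hp2⟩
  · left; rw [← hag, he, ← hp1]; exact hgm
  · right; rw [← hag, he, ← hp2]; exact hgM
  · right; rw [← hag, he, ← hp2]; exact hgM
  · left; rw [← hag, he, ← hp1]; exact hgm

private lemma fence_clopen_sandwich {Y : Type*} [TopologicalSpace Y] [T2Space Y] [CompactSpace Y]
    (x : Y) (V : Set Y) (hV : IsOpen V) (hsub : connectedComponent x ⊆ V) :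
    ∃ K : Set Y, IsClopen K ∧ connectedComponent x ⊆ K ∧ K ⊆ V := by
  have hrepr := connectedComponent_eq_iInter_isClopen x
  have hcVc : IsCompact Vᶜ := hV.isClosed_compl.isCompact
  have hcov : Vᶜ ⊆ ⋃ Z : {Z : Set Y // IsClopen Z ∧ x ∈ Z}, (Z : Set Y)ᶜ := by
    intro t ht
    by_contra hcon
    simp only [mem_iUnion, not_exists, mem_compl_iff, not_not] at hcon
    have htc : t ∈ connectedComponent x := by rw [hrepr, mem_iInter]; exact fun Z => hcon Z
    exact ht (hsub htc)
  obtain ⟨s, hs⟩ := hcVc.elim_finite_subcover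
    (fun Z : {Z : Set Y // IsClopen Z ∧ x ∈ Z} => (Z : Set Y)ᶜ)
    (fun Z => Z.2.1.compl.isOpen) hcov
  refine ⟨⋂ Z ∈ s, (Z : Set Y), isClopen_biInter_finset (fun Z _ => Z.2.1), ?_, ?_⟩
  · intro t ht
    rw [hrepr, mem_iInter] at ht
    exact mem_iInter₂.mpr fun Z _ => ht Z
  · intro t ht
    by_contra htV
    obtain ⟨Z, hZs, htZ⟩ := mem_iUnion₂.mp (hs htV)
    exact htZ (mem_iInter₂.mp ht Z hZs)

private lemma fence_small_arc {Y : Type*} [MetricSpace Y] [CompactSpace Y]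
    (r : Y → Y → Prop) (hcl : IsClosed {p : Y × Y | r p.1 p.2})
    (hrefl : ∀ x, r x x) (hanti : ∀ s t, r s t → r t s → s = t)
    (htrans : ∀ a b c, r a b → r b c → r a c)
    (hcomp : ∀ x : Y, ∀ y ∈ connectedComponent x, ∀ z ∈ connectedComponent x, r y z ∨ r z y)
    (hfr : ∀ O O' : Set Y, IsOpen O → IsOpen O' →
      (∃ z : Y, (O ∩ connectedComponent z).Nonempty ∧ (O' ∩ connectedComponent z).Nonempty) →
      ∃ w : Y, IsArc (connectedComponent w) ∧
        ∃ a b : Y, a ≠ b ∧ a ∈ O ∧ b ∈ O' ∧ IsEndpointOfArc (connectedComponent w) a ∧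
          IsEndpointOfArc (connectedComponent w) b)
    (x : Y) (ε : ℝ) (hε : 0 < ε) :
    ∃ w : Y, IsArc (connectedComponent w) ∧ (∃ u v : Y, u ∈ connectedComponent w ∧
      v ∈ connectedComponent w ∧ u ≠ v) ∧ connectedComponent w ⊆ Metric.ball x ε := by
  have step : ∀ δ : ℝ, 0 < δ → ∃ w m M : Y, IsArc (connectedComponent w) ∧
      m ∈ connectedComponent w ∧ M ∈ connectedComponent w ∧ m ≠ M ∧
      (∀ c ∈ connectedComponent w, r m c) ∧ (∀ c ∈ connectedComponent w, r c M) ∧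
      dist m x < δ ∧ dist M x < δ := by
    intro δ hδ
    obtain ⟨w, hArc, a, b, hab, haO, hbO, haE, hbE⟩ := hfr (Metric.ball x δ) (Metric.ball x δ)
      Metric.isOpen_ball Metric.isOpen_ball
      ⟨x, ⟨x, Metric.mem_ball_self hδ, mem_connectedComponent⟩,
          ⟨x, Metric.mem_ball_self hδ, mem_connectedComponent⟩⟩
    set C := connectedComponent w with hCdef
    have hCcpt : IsCompact C := isClosed_connectedComponent.isCompact
    have hCne : C.Nonempty := ⟨w, mem_connectedComponent⟩
    have htotC : ∀ y ∈ C, ∀ z ∈ C, r y z ∨ r z y := hcomp w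
    obtain ⟨M, hMC, hMmax⟩ := fence_exists_max r hcl hrefl htrans C hCcpt hCne htotC
    have hclswap : IsClosed {p : Y × Y | r p.2 p.1} := by
      have h1 : {p : Y × Y | r p.2 p.1} = Prod.swap ⁻¹' {p : Y × Y | r p.1 p.2} := rfl
      rw [h1]; exact hcl.preimage continuous_swap
    obtain ⟨m, hmC, hmin⟩ := fence_exists_max (fun s t => r t s) hclswap hrefl
      (fun a b c h1 h2 => htrans c b a h2 h1) C hCcpt hCne
      (fun y hy z hz => (htotC y hy z hz).symm)
    have haC : a ∈ C := haE.choose_spec.choose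
    have hbC : b ∈ C := hbE.choose_spec.choose
    have hmM : m ≠ M := by
      intro e
      apply hab
      have h1 : a = m := hanti a m (by rw [e]; exact hMmax a haC) (hmin a haC)
      have h2 : b = m := hanti b m (by rw [e]; exact hMmax b hbC) (hmin b hbC)
      rw [h1, h2]
    have hae := fence_endpoint_eq r hcl hrefl hanti C htotC m M hmC hMC hmin hMmax hmM a haE
    have hbe := fence_endpoint_eq r hcl hrefl hanti C htotC m M hmC hMC hmin hMmax hmM b hbE
    have hmem : dist m x < δ ∧ dist M x < δ := by
      rcases hae with rfl | rfl <;> rcases hbe with rfl | rfl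
      · exact absurd rfl hab
      · exact ⟨Metric.mem_ball.mp haO, Metric.mem_ball.mp hbO⟩
      · exact ⟨Metric.mem_ball.mp hbO, Metric.mem_ball.mp haO⟩
      · exact absurd rfl hab
    exact ⟨w, m, M, hArc, hmC, hMC, hmM, hmin, hMmax, hmem.1, hmem.2⟩
  have hstep : ∀ n : ℕ, ∃ w m M : Y, IsArc (connectedComponent w) ∧
      m ∈ connectedComponent w ∧ M ∈ connectedComponent w ∧ m ≠ M ∧
      (∀ c ∈ connectedComponent w, r m c) ∧ (∀ c ∈ connectedComponent w, r c M) ∧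
      dist m x < 1 / (n + 1) ∧ dist M x < 1 / (n + 1) :=
    fun n => step (1 / (n + 1)) (by positivity)
  choose w m M hArc hmC hMC hmM hmin hmax hmd hMd using hstep
  by_contra hcon
  push_neg at hcon
  have hy : ∀ n : ℕ, ∃ y, y ∈ connectedComponent (w n) ∧ y ∉ Metric.ball x ε := by
    intro n
    exact Set.not_subset.mp (hcon (w n) (hArc n) ⟨m n, M n, hmC n, hMC n, hmM n⟩)
  choose y hy1 hy2 using hy
  obtain ⟨p, -, φ, hφ, htend⟩ := IsCompact.tendsto_subseq isCompact_univ
    (fun n => mem_univ (y n))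
  have hmx : Filter.Tendsto m Filter.atTop (nhds x) := by
    rw [tendsto_iff_dist_tendsto_zero]
    exact squeeze_zero (fun n => dist_nonneg) (fun n => (hmd n).le)
      tendsto_one_div_add_atTop_nhds_zero_nat
  have hMx : Filter.Tendsto M Filter.atTop (nhds x) := by
    rw [tendsto_iff_dist_tendsto_zero]
    exact squeeze_zero (fun n => dist_nonneg) (fun n => (hMd n).le)
      tendsto_one_div_add_atTop_nhds_zero_nat
  have hmφ : Filter.Tendsto (fun k => m (φ k)) Filter.atTop (nhds x) :=
    hmx.comp hφ.tendsto_atTop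
  have hMφ : Filter.Tendsto (fun k => M (φ k)) Filter.atTop (nhds x) :=
    hMx.comp hφ.tendsto_atTop
  have hr1 : r x p :=
    hcl.mem_of_tendsto (hmφ.prodMk_nhds htend)
      (Filter.Eventually.of_forall (fun k => hmin (φ k) (y (φ k)) (hy1 (φ k))))
  have hr2 : r p x :=
    hcl.mem_of_tendsto (htend.prodMk_nhds hMφ)
      (Filter.Eventually.of_forall (fun k => hmax (φ k) (y (φ k)) (hy1 (φ k))))
  have hpx : p = x := hanti p x hr2 hr1
  have hdist : ε ≤ dist p x := by
    have hd : Filter.Tendsto (fun k => dist (y (φ k)) x) Filter.atTop (nhds (dist p x)) :=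
      htend.dist tendsto_const_nhds
    exact ge_of_tendsto hd (Filter.Eventually.of_forall fun k =>
      not_lt.mp (fun hlt => hy2 (φ k) (Metric.mem_ball.mpr hlt)))
  rw [hpx, dist_self] at hdist
  exact absurd hdist (not_le.mpr hε)

private lemma fence_singleton {Y : Type*} [MetricSpace Y] [CompactSpace Y]
    (r : Y → Y → Prop) (hcl : IsClosed {p : Y × Y | r p.1 p.2})
    (hrefl : ∀ x, r x x) (hanti : ∀ s t, r s t → r t s → s = t)
    (htrans : ∀ a b c, r a b → r b c → r a c)
    (hcomp : ∀ x : Y, ∀ y ∈ connectedComponent x, ∀ z ∈ connectedComponent x, r y z ∨ r z y)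
    (hfr : ∀ O O' : Set Y, IsOpen O → IsOpen O' →
      (∃ z : Y, (O ∩ connectedComponent z).Nonempty ∧ (O' ∩ connectedComponent z).Nonempty) →
      ∃ w : Y, IsArc (connectedComponent w) ∧
        ∃ a b : Y, a ≠ b ∧ a ∈ O ∧ b ∈ O' ∧ IsEndpointOfArc (connectedComponent w) a ∧
          IsEndpointOfArc (connectedComponent w) b)
    (U : Set Y) (hU : IsOpen U) (x : Y) (hx : x ∈ U) :
    ∃ z ∈ U, connectedComponent z = {z} := by
  have step : ∀ (K : Set Y), IsClopen K → ∀ x0 ∈ K, ∀ δ : ℝ, 0 < δ →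
      ∃ K' : Set Y, IsClopen K' ∧ K'.Nonempty ∧ K' ⊆ K ∧ K' ⊆ Metric.ball x0 δ := by
    intro K hK x0 hx0 δ hδ
    obtain ⟨ε0, hε0, hball⟩ := Metric.isOpen_iff.mp (hK.isOpen.inter Metric.isOpen_ball) x0
      ⟨hx0, Metric.mem_ball_self hδ⟩
    obtain ⟨w, hArc, hnt, hsub⟩ := fence_small_arc r hcl hrefl hanti htrans hcomp hfr x0
      (min ε0 δ) (lt_min hε0 hδ)
    have hsub' : connectedComponent w ⊆ K ∩ Metric.ball x0 δ := fun t ht =>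
      hball (Metric.ball_subset_ball (min_le_left _ _) (hsub ht))
    obtain ⟨K', hK', hccK', hK'sub⟩ := fence_clopen_sandwich w (K ∩ Metric.ball x0 δ)
      (hK.isOpen.inter Metric.isOpen_ball) hsub'
    exact ⟨K', hK', ⟨w, hccK' mem_connectedComponent⟩, fun t ht => (hK'sub ht).1,
      fun t ht => (hK'sub ht).2⟩
  obtain ⟨ε0, hε0, hballU⟩ := Metric.isOpen_iff.mp hU x hx
  obtain ⟨K0, hK0, hK0ne, -, hK0sub⟩ := step univ isClopen_univ x (mem_univ x) ε0 hε0
  have step' : ∀ (n : ℕ) (p : {K : Set Y // IsClopen K ∧ K.Nonempty}),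
      ∃ q : {K : Set Y // IsClopen K ∧ K.Nonempty},
        q.1 ⊆ p.1 ∧ ∃ c, q.1 ⊆ Metric.ball c ((1 / 2) ^ n) := by
    intro n p
    obtain ⟨x0, hx0⟩ := p.2.2
    obtain ⟨K', h1, h2, h3, h4⟩ := step p.1 p.2.1 x0 hx0 ((1 / 2) ^ n) (by positivity)
    exact ⟨⟨K', h1, h2⟩, h3, x0, h4⟩
  choose f hf1 hf2 using step'
  let seq : ℕ → {K : Set Y // IsClopen K ∧ K.Nonempty} := fun n =>
    Nat.rec ⟨K0, hK0, hK0ne⟩ (fun n p => f n p) n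
  have hseqs : ∀ n, seq (n + 1) = f n (seq n) := fun n => rfl
  have hsub : ∀ n, (seq (n + 1)).1 ⊆ (seq n).1 := fun n => by
    rw [hseqs n]; exact hf1 n (seq n)
  obtain ⟨z, hz⟩ := IsCompact.nonempty_iInter_of_sequence_nonempty_isCompact_isClosed
    (fun n => (seq n).1) hsub (fun n => (seq n).2.2) (seq 0).2.1.isClosed.isCompact
    (fun n => (seq n).2.1.isClosed)
  rw [mem_iInter] at hz
  refine ⟨z, hballU (hK0sub (hz 0)), ?_⟩
  have hcc : ∀ n, connectedComponent z ⊆ (seq n).1 := fun n =>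
    (seq n).2.1.connectedComponent_subset (hz n)
  apply Set.eq_singleton_iff_unique_mem.mpr
  refine ⟨mem_connectedComponent, ?_⟩
  intro y hy
  by_contra hyz
  have hpos : 0 < dist y z := dist_pos.mpr hyz
  have hlt : ∀ n : ℕ, dist y z < 2 * (1 / 2) ^ n := by
    intro n
    obtain ⟨c, hc⟩ := hf2 n (seq n)
    have h' : (seq (n + 1)).1 ⊆ Metric.ball c ((1 / 2) ^ n) := by rw [hseqs n]; exact hc
    have hyb := Metric.mem_ball.mp (h' (hcc (n + 1) hy))
    have hzb := Metric.mem_ball.mp (h' (hz (n + 1)))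
    calc dist y z ≤ dist y c + dist c z := dist_triangle y c z
      _ < (1 / 2) ^ n + (1 / 2) ^ n := by
          rw [dist_comm c z]; exact add_lt_add hyb hzb
      _ = 2 * (1 / 2) ^ n := by ring
  have htend2 : Filter.Tendsto (fun n : ℕ => 2 * (1 / 2 : ℝ) ^ n) Filter.atTop (nhds 0) := by
    have h1 := tendsto_pow_atTop_nhds_zero_of_lt_one (by norm_num : (0:ℝ) ≤ 1 / 2)
      (by norm_num : (1 / 2 : ℝ) < 1)
    simpa using h1.const_mul 2
  obtain ⟨n, hn⟩ := (htend2.eventually_lt_const hpos).exists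
  exact absurd (hlt n) (not_lt.mpr hn.le)

/-- In the Fraïssé fence, both the set of points which are maximal but not minimal and the
set of points which are simultaneously minimal and maximal are dense. -/
theorem stmt_18 (Y : Type*) [TopologicalSpace Y] (hY : IsFraisseFence Y)
    (r : Y → Y → Prop) (hr : IsStronglyCompatibleOrder r) :
    Dense {x : Y | (∀ y, r x y → y = x) ∧ ¬ (∀ y, r y x → y = x)} ∧
    Dense {x : Y | (∀ y, r y x → y = x) ∧ (∀ y, r x y → y = x)} := by
  obtain ⟨hYne, ⟨⟨hcs, hms, hcompnts⟩, -⟩, hfr⟩ := hY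
  obtain ⟨⟨⟨hcl, hrefl, hanti, htrans⟩, hcomp⟩, hstrong⟩ := hr
  haveI := hcs
  haveI := hms
  letI : MetricSpace Y := TopologicalSpace.metrizableSpaceMetric Y
  have hanti' : ∀ s t : Y, r s t → r t s → s = t := fun s t h1 h2 => hanti h1 h2
  have htrans' : ∀ a b c : Y, r a b → r b c → r a c := fun a b c h1 h2 => htrans h1 h2
  have hrefl' : ∀ x : Y, r x x := fun x => hrefl x
  constructor
  · rw [dense_iff_inter_open]
    rintro U hU ⟨x, hx⟩
    obtain ⟨ε, hε, hball⟩ := Metric.isOpen_iff.mp hU x hx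
    obtain ⟨w, hArc, ⟨u, v, huC, hvC, huv⟩, hsub⟩ :=
      fence_small_arc r hcl hrefl' hanti' htrans' hcomp hfr x ε hε
    have hCcpt : IsCompact (connectedComponent w) := isClosed_connectedComponent.isCompact
    have hCne : (connectedComponent w).Nonempty := ⟨w, mem_connectedComponent⟩
    obtain ⟨M, hMC, hMmax⟩ := fence_exists_max r hcl hrefl' htrans' (connectedComponent w) hCcpt hCne (hcomp w)
    have hclswap : IsClosed {p : Y × Y | r p.2 p.1} := by
      have h1 : {p : Y × Y | r p.2 p.1} = Prod.swap ⁻¹' {p : Y × Y | r p.1 p.2} := rfl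
      rw [h1]; exact hcl.preimage continuous_swap
    obtain ⟨m, hmC, hmin⟩ := fence_exists_max (fun s t => r t s) hclswap hrefl'
      (fun a b c h1 h2 => htrans' c b a h2 h1) (connectedComponent w) hCcpt hCne
      (fun y hy z hz => (hcomp w y hy z hz).symm)
    have hmM : m ≠ M := by
      intro e
      apply huv
      have h1 : u = m := hanti' u m (by rw [e]; exact hMmax u huC) (hmin u huC)
      have h2 : v = m := hanti' v m (by rw [e]; exact hMmax v hvC) (hmin v hvC)
      rw [h1, h2]
    have hMcc : connectedComponent M = connectedComponent w := (connectedComponent_eq hMC).symm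
    refine ⟨M, hball (hsub hMC), ?_, ?_⟩
    · intro y hyM
      have hyC : y ∈ connectedComponent w := by rw [← hMcc]; exact hstrong M y hyM
      exact hanti' y M (hMmax y hyC) hyM
    · intro hall
      exact hmM (hall m (hmin M hMC))
  · rw [dense_iff_inter_open]
    rintro U hU ⟨x, hx⟩
    obtain ⟨z, hzU, hzcc⟩ := fence_singleton r hcl hrefl' hanti' htrans' hcomp hfr U hU x hx
    refine ⟨z, hzU, ?_, ?_⟩
    · intro y hyz
      have h1 : z ∈ connectedComponent y := hstrong y z hyz
      have h2 : y ∈ connectedComponent z := by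
        rw [← connectedComponent_eq h1]; exact mem_connectedComponent
      rw [hzcc] at h2; exact h2
    · intro y hzy
      have h1 : y ∈ connectedComponent z := hstrong z y hzy
      rw [hzcc] at h1; exact h1
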